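/- Let F be a finite field, G = GL₂(F[t]), B the subgroup of G consisting of upper-triangular elements (those X with lower-left matrix entry 0), and U the subgroup of upper-unipotent elements {u(a) : a ∈ F[t]}. Then for every group automorphism σ of G there exists g ∈ G such that σ(B) = gBg⁻¹ and σ(U) = gUg⁻¹. -/

import Mathlib

/-- The unipotent element `u(a) = [[1,a],[0,1]]` of `GL₂(R)`. -/
noncomputable def unip {R : Type*} [CommRing R] (a : R) :
    Matrix.GeneralLinearGroup (Fin 2) R :=
  ⟨!![1, a; 0, 1], !![1, -a; 0, 1],
    by simp [Matrix.mul_fin_two, Matrix.one_fin_two],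
    by simp [Matrix.mul_fin_two, Matrix.one_fin_two]⟩

/-- The subgroup `B` of upper-triangular elements of `GL₂(F[t])`. -/
noncomputable def upperTriangular (F : Type*) [Field F] :
    Subgroup (Matrix.GeneralLinearGroup (Fin 2) (Polynomial F)) where
  carrier := {X | (X : Matrix (Fin 2) (Fin 2) (Polynomial F)) 1 0 = 0}
  one_mem' := by
    simp [Matrix.one_apply]
  mul_mem' := by
    intro X Y hX hY
    simp only [Set.mem_setOf_eq] at *
    rw [Matrix.GeneralLinearGroup.coe_mul, Matrix.mul_apply]
    simp [Fin.sum_univ_succ, hX, hY]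
  inv_mem' := by
    intro X hX
    simp only [Set.mem_setOf_eq] at *
    rw [Matrix.GeneralLinearGroup.coe_inv, Matrix.inv_def, Matrix.adjugate_fin_two]
    simp [hX]

/-- The subgroup `U = {u(a) : a ∈ F[t]}` of upper-unipotent elements of `GL₂(F[t])`. -/
noncomputable def upperUnipotent (F : Type*) [Field F] :
    Subgroup (Matrix.GeneralLinearGroup (Fin 2) (Polynomial F)) where
  carrier := {X | ∃ a : Polynomial F, X = unip a}
  one_mem' := ⟨0, Units.ext (by simp [unip, Matrix.one_fin_two])⟩
  mul_mem' := by
    rintro X Y ⟨a, rfl⟩ ⟨b, rfl⟩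
    exact ⟨a + b, Units.ext (by simp [unip, Matrix.mul_fin_two, add_comm])⟩
  inv_mem' := by
    rintro X ⟨a, rfl⟩
    exact ⟨-a, Units.ext rfl⟩

section Aux

open Matrix

variable {F : Type} [Field F]

local notation "R" => Polynomial F
local notation "GL2" => Matrix.GeneralLinearGroup (Fin 2) (Polynomial F)

lemma unip_val (a : R) : ((unip a : GL2) : Matrix (Fin 2) (Fin 2) R) = !![1, a; 0, 1] := rfl

lemma unip_mul (a b : R) : (unip a : GL2) * unip b = unip (a + b) :=
  Units.ext (by simp [unip, Matrix.mul_fin_two, add_comm])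

lemma unip_zero : (unip (0 : R) : GL2) = 1 :=
  Units.ext (by simp [unip, Matrix.one_fin_two])

lemma unip_eq_one_iff (a : R) : (unip a : GL2) = 1 ↔ a = 0 := by
  constructor
  · intro h
    have hval : ((unip a : GL2) : Matrix (Fin 2) (Fin 2) R)
        = ((1 : GL2) : Matrix (Fin 2) (Fin 2) R) := by rw [h]
    rw [unip_val, Units.val_one] at hval
    have h3 := congrFun (congrFun hval 0) 1
    simpa [Matrix.one_apply] using h3
  · rintro rfl
    exact unip_zero

lemma unip_pow (a : R) (n : ℕ) : (unip a : GL2) ^ n = unip ((n : R) * a) := by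
  induction n with
  | zero => simp [unip_zero]
  | succ n ih =>
    rw [pow_succ, ih, unip_mul]
    push_cast
    ring_nf

lemma mem_B_iff (X : GL2) :
    X ∈ upperTriangular F ↔ (X : Matrix (Fin 2) (Fin 2) R) 1 0 = 0 := Iff.rfl

lemma unip_mem_B (a : R) : (unip a : GL2) ∈ upperTriangular F := by
  rw [mem_B_iff, unip_val]
  simp

lemma pow_entries (X : GL2) (hX : (X : Matrix (Fin 2) (Fin 2) R) 1 0 = 0) (n : ℕ) :
    ((X ^ n : GL2) : Matrix (Fin 2) (Fin 2) R) 1 0 = 0 ∧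
      ((X ^ n : GL2) : Matrix (Fin 2) (Fin 2) R) 0 0 = ((X : Matrix (Fin 2) (Fin 2) R) 0 0) ^ n ∧
      ((X ^ n : GL2) : Matrix (Fin 2) (Fin 2) R) 1 1 = ((X : Matrix (Fin 2) (Fin 2) R) 1 1) ^ n := by
  induction n with
  | zero => simp [Matrix.one_apply]
  | succ n ih =>
    obtain ⟨h1, h2, h3⟩ := ih
    have hv : ((X ^ (n+1) : GL2) : Matrix (Fin 2) (Fin 2) R)
        = ((X ^ n : GL2) : Matrix (Fin 2) (Fin 2) R) * (X : Matrix (Fin 2) (Fin 2) R) := by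
      rw [pow_succ, Units.val_mul]
    refine ⟨?_, ?_, ?_⟩
    · simp only [hv, Matrix.mul_apply, Fin.sum_univ_two]
      rw [h1, hX]; ring
    · simp only [hv, Matrix.mul_apply, Fin.sum_univ_two]
      rw [hX, h2]; ring
    · simp only [hv, Matrix.mul_apply, Fin.sum_univ_two]
      rw [h1, h3]; ring

lemma isUnit_diag (X : GL2) (hX : X ∈ upperTriangular F) :
    IsUnit ((X : Matrix (Fin 2) (Fin 2) R) 0 0) ∧ IsUnit ((X : Matrix (Fin 2) (Fin 2) R) 1 1) := by
  have hdet : IsUnit ((X : Matrix (Fin 2) (Fin 2) R).det) := by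
    refine IsUnit.of_mul_eq_one (((X⁻¹ : GL2) : Matrix (Fin 2) (Fin 2) R).det) ?_
    rw [← Matrix.det_mul, ← Units.val_mul, mul_inv_cancel, Units.val_one, Matrix.det_one]
  rw [Matrix.det_fin_two, (mem_B_iff X).mp hX, mul_zero, sub_zero] at hdet
  exact ⟨isUnit_of_mul_isUnit_left hdet, isUnit_of_mul_isUnit_right hdet⟩

lemma mem_U_of (X : GL2) (hB : X ∈ upperTriangular F)
    (h00 : (X : Matrix (Fin 2) (Fin 2) R) 0 0 = 1)
    (h11 : (X : Matrix (Fin 2) (Fin 2) R) 1 1 = 1) :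
    X ∈ upperUnipotent F := by
  refine ⟨(X : Matrix (Fin 2) (Fin 2) R) 0 1, Units.ext ?_⟩
  rw [unip_val]
  ext i j
  fin_cases i <;> fin_cases j <;>
    simp [h00, h11, (mem_B_iff X).mp hB]

variable [Fintype F]

lemma mem_U_iff_charP (X : GL2) :
    X ∈ upperUnipotent F ↔ X ∈ upperTriangular F ∧ X ^ (ringChar F) = 1 := by
  haveI : Fact (Nat.Prime (ringChar F)) := ⟨CharP.char_is_prime F _⟩
  constructor
  · rintro ⟨a, rfl⟩
    refine ⟨unip_mem_B a, ?_⟩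
    rw [unip_pow, CharP.cast_eq_zero, zero_mul, unip_zero]
  · rintro ⟨hB, hp⟩
    obtain ⟨h1, h2, h3⟩ := pow_entries X ((mem_B_iff X).mp hB) (ringChar F)
    rw [hp] at h2 h3
    have e1 : ((X : Matrix (Fin 2) (Fin 2) R) 0 0) ^ (ringChar F) = 1 := by
      rw [← h2]; simp [Matrix.one_apply]
    have e2 : ((X : Matrix (Fin 2) (Fin 2) R) 1 1) ^ (ringChar F) = 1 := by
      rw [← h3]; simp [Matrix.one_apply]
    obtain ⟨hu1, hu2⟩ := isUnit_diag X hB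
    have key : ∀ c : R, IsUnit c → c ^ (ringChar F) = 1 → c = 1 := by
      intro c hc hcp
      obtain ⟨r, -, rfl⟩ := Polynomial.isUnit_iff.mp hc
      rw [← Polynomial.C_pow, ← Polynomial.C_1, Polynomial.C_inj] at hcp
      rw [← Polynomial.C_1, Polynomial.C_inj]
      exact frobenius_inj F (ringChar F) (by simpa [frobenius_def] using hcp)
    exact mem_U_of X hB (key _ hu1 e1) (key _ hu2 e2)

lemma nilp_two (p : ℕ) [Fact (Nat.Prime p)] (M : Matrix (Fin 2) (Fin 2) R)
    (h : M ^ p = 0) :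
    M * M = 0 ∧ M 1 1 = - M 0 0 ∧ M 0 0 * M 1 1 - M 0 1 * M 1 0 = 0 := by
  have hp2 : 2 ≤ p := (Fact.out : Nat.Prime p).two_le
  have hdet : M.det = 0 := by
    have h2 : M.det ^ p = 0 := by
      rw [← Matrix.det_pow, h]
      exact Matrix.det_zero
    exact (pow_eq_zero_iff (by omega)).mp h2
  have hdet' : M 0 0 * M 1 1 - M 0 1 * M 1 0 = 0 := by
    rw [← Matrix.det_fin_two]; exact hdet
  have ch : M * M = (M 0 0 + M 1 1) • M := by
    refine Matrix.ext fun i j => ?_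
    fin_cases i <;> fin_cases j <;>
      · simp only [Matrix.mul_apply, Fin.sum_univ_two, Matrix.smul_apply, smul_eq_mul,
          Fin.mk_zero, Fin.mk_one]
        first
        | ring1
        | linear_combination (-1 : Polynomial F) * hdet'
  by_cases hM : M = 0
  · exact ⟨by rw [hM]; simp, by rw [hM]; simp, hdet'⟩
  · have powf : ∀ k : ℕ, M ^ (k + 1) = ((M 0 0 + M 1 1) ^ k) • M := by
      intro k
      induction k with
      | zero => simp
      | succ k ih =>
        rw [pow_succ, ih, Matrix.smul_mul, ch, smul_smul, ← pow_succ]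
    obtain ⟨k, hk⟩ : ∃ k, p = k + 1 := ⟨p - 1, by omega⟩
    have h0 : ((M 0 0 + M 1 1) ^ k) • M = 0 := by rw [← powf, ← hk, h]
    have hs : M 0 0 + M 1 1 = 0 := by
      by_contra hs
      apply hM
      refine Matrix.ext fun i j => ?_
      have hij := congrFun (congrFun h0 i) j
      simp only [Matrix.smul_apply, smul_eq_mul, Matrix.zero_apply] at hij
      exact (mul_eq_zero.mp hij).resolve_left (pow_ne_zero k hs)
    exact ⟨by rw [ch, hs, zero_smul], by linear_combination hs, hdet'⟩

lemma mem_B_of_conj_mem (k : GL2) (h : k⁻¹ * unip 1 * k ∈ upperTriangular F) :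
    k ∈ upperTriangular F := by
  have hrel : (unip (1:R) : GL2) * k = k * (k⁻¹ * unip 1 * k) := by group
  have hval : ((unip (1:R) : GL2) : Matrix (Fin 2) (Fin 2) R) * (k : Matrix (Fin 2) (Fin 2) R)
      = (k : Matrix (Fin 2) (Fin 2) R) * ((k⁻¹ * unip 1 * k : GL2) : Matrix (Fin 2) (Fin 2) R) := by
    rw [← Units.val_mul, ← Units.val_mul, hrel]
  have hY := (mem_B_iff _).mp h
  set Y := ((k⁻¹ * unip 1 * k : GL2) : Matrix (Fin 2) (Fin 2) R) with hYdef
  set K := (k : Matrix (Fin 2) (Fin 2) R) with hKdef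
  have e10 : K 1 0 = K 1 0 * Y 0 0 := by
    have h2 := congrFun (congrFun hval 1) 0
    simpa [unip_val, Matrix.mul_apply, Fin.sum_univ_two, hY] using h2
  have e00 : K 0 0 + K 1 0 = K 0 0 * Y 0 0 := by
    have h2 := congrFun (congrFun hval 0) 0
    simpa [unip_val, Matrix.mul_apply, Fin.sum_univ_two, hY] using h2
  have hz : K 1 0 * K 1 0 = 0 := by linear_combination K 1 0 * e00 - K 0 0 * e10
  exact (mem_B_iff k).mpr (mul_self_eq_zero.mp hz)

lemma conj_unip_mem (X : GL2) (hX : X ∈ upperTriangular F) (c : R) :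
    X * unip c * X⁻¹ ∈ upperUnipotent F := by
  set W := X * unip c * X⁻¹ with hW
  have hWB : W ∈ upperTriangular F :=
    mul_mem (mul_mem hX (unip_mem_B c)) (inv_mem hX)
  have hW10 := (mem_B_iff W).mp hWB
  have hYX : ((X⁻¹ : GL2) : Matrix (Fin 2) (Fin 2) R) * (X : Matrix (Fin 2) (Fin 2) R) = 1 := by
    rw [← Units.val_mul, inv_mul_cancel, Units.val_one]
  have hXY : (X : Matrix (Fin 2) (Fin 2) R) * ((X⁻¹ : GL2) : Matrix (Fin 2) (Fin 2) R) = 1 := by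
    rw [← Units.val_mul, mul_inv_cancel, Units.val_one]
  have hWval : (W : Matrix (Fin 2) (Fin 2) R)
      = (X : Matrix (Fin 2) (Fin 2) R) * ((unip c : GL2) : Matrix (Fin 2) (Fin 2) R)
        * ((X⁻¹ : GL2) : Matrix (Fin 2) (Fin 2) R) := by
    rw [hW, Units.val_mul, Units.val_mul]
  have htrace : (W : Matrix (Fin 2) (Fin 2) R).trace = 2 := by
    rw [hWval, Matrix.trace_mul_comm, ← mul_assoc, hYX, one_mul, unip_val, Matrix.trace_fin_two]
    norm_num
  have hdet : (W : Matrix (Fin 2) (Fin 2) R).det = 1 := by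
    rw [hWval, Matrix.det_mul, Matrix.det_mul]
    have h1 : (X : Matrix (Fin 2) (Fin 2) R).det * ((X⁻¹ : GL2) : Matrix (Fin 2) (Fin 2) R).det = 1 := by
      rw [← Matrix.det_mul, hXY, Matrix.det_one]
    have h2 : ((unip c : GL2) : Matrix (Fin 2) (Fin 2) R).det = 1 := by
      rw [unip_val, Matrix.det_fin_two]; simp
    rw [h2]; linear_combination h1
  rw [Matrix.trace_fin_two] at htrace
  rw [Matrix.det_fin_two, hW10, mul_zero, sub_zero] at hdet
  set w0 := (W : Matrix (Fin 2) (Fin 2) R) 0 0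
  set w1 := (W : Matrix (Fin 2) (Fin 2) R) 1 1
  have hz : (w0 - 1) * (w1 - 1) = 0 := by linear_combination hdet - htrace
  have hdiag : w0 = 1 ∧ w1 = 1 := by
    rcases mul_eq_zero.mp hz with h | h
    · have h0 : w0 = 1 := by linear_combination h
      exact ⟨h0, by linear_combination htrace - h0⟩
    · have h1 : w1 = 1 := by linear_combination h
      exact ⟨by linear_combination htrace - h1, h1⟩
  exact mem_U_of W hWB hdiag.1 hdiag.2

lemma conj_into_B (σ : MulAut GL2) :
    ∃ P : GL2, ∀ X ∈ upperTriangular F, P⁻¹ * σ X * P ∈ upperTriangular F := by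
  classical
  haveI hfp : Fact (Nat.Prime (ringChar F)) := ⟨CharP.char_is_prime F _⟩
  set p := ringChar F with hpdef
  set x := σ (unip 1) with hxdef
  have hx1 : x ≠ 1 := by
    intro hx
    have h2 : (unip (1:R) : GL2) = 1 := σ.injective (by rw [← hxdef, hx, _root_.map_one])
    exact one_ne_zero ((unip_eq_one_iff (1:R)).mp h2)
  have hxp : x ^ p = 1 := by
    rw [hxdef, ← _root_.map_pow, unip_pow, CharP.cast_eq_zero, zero_mul, unip_zero, _root_.map_one]
  have nilpow : ∀ z : GL2, z ^ p = 1 → ((z : Matrix (Fin 2) (Fin 2) R) - 1) ^ p = 0 := by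
    intro z hz
    have h2 : ((z : Matrix (Fin 2) (Fin 2) R) - 1) ^ p
        = (z : Matrix (Fin 2) (Fin 2) R) ^ p - 1 ^ p :=
      sub_pow_char_of_commute p (Commute.one_right _)
    rw [h2, one_pow, ← Units.val_pow_eq_pow_val, hz, Units.val_one, sub_self]
  set m : Matrix (Fin 2) (Fin 2) R := (x : Matrix (Fin 2) (Fin 2) R) - 1 with hmdef
  obtain ⟨hm2, hm11, hmdet⟩ := nilp_two p m (nilpow x hxp)
  have hmne : m ≠ 0 := by
    intro h0
    rw [hmdef, sub_eq_zero] at h0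
    exact hx1 (Units.ext (by rw [Units.val_one]; exact h0))
  -- construction of the common eigenvector v
  obtain ⟨v, hv, hmv, hcross⟩ :
      ∃ v : Fin 2 → R, (v 0 ≠ 0 ∨ v 1 ≠ 0) ∧ m *ᵥ v = 0 ∧
        ∀ w : Fin 2 → R, m *ᵥ w = 0 → w 0 * v 1 = w 1 * v 0 := by
    by_cases hc : m 0 0 = 0 ∧ m 0 1 = 0
    · have hm10 : m 1 0 ≠ 0 := by
        intro h10
        apply hmne
        refine Matrix.ext fun i j => ?_
        fin_cases i <;> fin_cases j <;>
          simp [hc.1, hc.2, h10, hm11]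
      refine ⟨![0, 1], Or.inr one_ne_zero, ?_, ?_⟩
      · funext i
        fin_cases i <;>
          simp [Matrix.mulVec, dotProduct, Fin.sum_univ_two, hc.1, hc.2, hm11]
      · intro w hw
        have h1 := congrFun hw 1
        simp only [Matrix.mulVec, dotProduct, Fin.sum_univ_two, Pi.zero_apply] at h1
        rw [hm11, hc.1] at h1
        have hw0 : w 0 = 0 := by
          have h2 : m 1 0 * w 0 = 0 := by linear_combination h1
          exact (mul_eq_zero.mp h2).resolve_left hm10
        simp [hw0]
    · refine ⟨![m 0 1, -(m 0 0)], ?_, ?_, ?_⟩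
      · rcases not_and_or.mp hc with h | h
        · exact Or.inr (by simpa using neg_ne_zero.mpr h)
        · exact Or.inl (by simpa using h)
      · funext i
        fin_cases i <;>
          · simp only [Matrix.mulVec, dotProduct, Fin.sum_univ_two, Pi.zero_apply,
              Matrix.cons_val_zero, Matrix.cons_val_one, Matrix.head_cons, Fin.mk_zero, Fin.mk_one]
            first
            | ring1
            | linear_combination (-1 : R) * hmdet
      · intro w hw
        have h0 := congrFun hw 0
        simp only [Matrix.mulVec, dotProduct, Fin.sum_univ_two, Pi.zero_apply] at h0
        simp only [Matrix.cons_val_zero, Matrix.cons_val_one, Matrix.head_cons]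
        linear_combination (-1 : R) * h0
  -- Claim A: matrices of σ-images of unipotents fix v
  have claimA : ∀ z : GL2, z ^ p = 1 →
      (z : Matrix (Fin 2) (Fin 2) R) * (x : Matrix (Fin 2) (Fin 2) R)
        = (x : Matrix (Fin 2) (Fin 2) R) * (z : Matrix (Fin 2) (Fin 2) R) →
      (z : Matrix (Fin 2) (Fin 2) R) *ᵥ v = v := by
    intro z hzp hzx
    set mz : Matrix (Fin 2) (Fin 2) R := (z : Matrix (Fin 2) (Fin 2) R) - 1 with hmzdef
    obtain ⟨hmz2, -, -⟩ := nilp_two p mz (nilpow z hzp)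
    have hcomm : m * mz = mz * m := by
      have c1 : Commute ((z : Matrix (Fin 2) (Fin 2) R)) ((x : Matrix (Fin 2) (Fin 2) R)) := hzx
      have c2 : Commute mz m := (c1.sub_left (Commute.one_left _)).sub_right (Commute.one_right _)
      exact c2.symm
    have hwm : m *ᵥ (mz *ᵥ v) = 0 := by
      rw [Matrix.mulVec_mulVec, hcomm, ← Matrix.mulVec_mulVec, hmv, Matrix.mulVec_zero]
    set w : Fin 2 → R := mz *ᵥ v with hwdef
    have hcw : w 0 * v 1 = w 1 * v 0 := hcross w hwm
    have hmzw : mz *ᵥ w = 0 := by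
      rw [hwdef, Matrix.mulVec_mulVec, hmz2, Matrix.zero_mulVec]
    have e1 : v 1 • w = w 1 • v := by
      funext i
      fin_cases i <;> simp only [Pi.smul_apply, smul_eq_mul, Fin.mk_zero, Fin.mk_one]
      · linear_combination hcw
      · ring
    have e0 : v 0 • w = w 0 • v := by
      funext i
      fin_cases i <;> simp only [Pi.smul_apply, smul_eq_mul, Fin.mk_zero, Fin.mk_one]
      · ring
      · linear_combination (-1 : R) * hcw
    have h1 : w 1 • w = 0 := by
      have e : w 1 • w = mz *ᵥ (w 1 • v) := by rw [Matrix.mulVec_smul, hwdef]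
      rw [e, ← e1, Matrix.mulVec_smul, hmzw, smul_zero]
    have h0 : w 0 • w = 0 := by
      have e : w 0 • w = mz *ᵥ (w 0 • v) := by rw [Matrix.mulVec_smul, hwdef]
      rw [e, ← e0, Matrix.mulVec_smul, hmzw, smul_zero]
    have hw1 : w 1 = 0 := by
      have := congrFun h1 1
      simp only [Pi.smul_apply, smul_eq_mul, Pi.zero_apply] at this
      exact mul_self_eq_zero.mp this
    have hw0 : w 0 = 0 := by
      have := congrFun h0 0
      simp only [Pi.smul_apply, smul_eq_mul, Pi.zero_apply] at this
      exact mul_self_eq_zero.mp this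
    have hwz : mz *ᵥ v = 0 := by
      rw [← hwdef]
      funext i
      fin_cases i
      · exact hw0
      · exact hw1
    rw [hmzdef, Matrix.sub_mulVec, Matrix.one_mulVec, sub_eq_zero] at hwz
    exact hwz
  -- build the change-of-basis matrix P from v
  have hd0 : EuclideanDomain.gcd (v 0) (v 1) ≠ 0 := by
    intro h0
    obtain ⟨h1, h2⟩ := EuclideanDomain.gcd_eq_zero_iff.mp h0
    rcases hv with h | h
    · exact h h1
    · exact h h2
  obtain ⟨a, ha⟩ := EuclideanDomain.gcd_dvd_left (v 0) (v 1)
  obtain ⟨b, hb⟩ := EuclideanDomain.gcd_dvd_right (v 0) (v 1)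
  obtain ⟨s, tt, hbz⟩ : ∃ s tt : R, EuclideanDomain.gcd (v 0) (v 1) = v 0 * s + v 1 * tt :=
    ⟨_, _, EuclideanDomain.gcd_eq_gcd_ab (v 0) (v 1)⟩
  set d := EuclideanDomain.gcd (v 0) (v 1) with hddef
  have habst : a * s + b * tt = 1 := by
    apply mul_left_cancel₀ hd0
    rw [mul_one]
    linear_combination (-1 : R) * hbz - s * ha - tt * hb
  have hP1 : (!![a, -tt; b, s] : Matrix (Fin 2) (Fin 2) R) * !![s, tt; -b, a] = 1 := by
    refine Matrix.ext fun i j => ?_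
    fin_cases i <;> fin_cases j <;>
      · simp [Matrix.mul_apply, Fin.sum_univ_two, Matrix.one_apply]
        first
        | ring1
        | linear_combination habst
        | linear_combination (-1 : R) * habst
  have hP2 : (!![s, tt; -b, a] : Matrix (Fin 2) (Fin 2) R) * !![a, -tt; b, s] = 1 := by
    refine Matrix.ext fun i j => ?_
    fin_cases i <;> fin_cases j <;>
      · simp [Matrix.mul_apply, Fin.sum_univ_two, Matrix.one_apply]
        first
        | ring1
        | linear_combination habst
        | linear_combination (-1 : R) * habst
  refine ⟨⟨!![a, -tt; b, s], !![s, tt; -b, a], hP1, hP2⟩, ?_⟩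
  intro X hX
  obtain ⟨c', hc'⟩ := conj_unip_mem X⁻¹ (inv_mem hX) 1
  rw [inv_inv] at hc'
  have hzp : (σ (unip c')) ^ p = 1 := by
    rw [← _root_.map_pow, unip_pow, CharP.cast_eq_zero, zero_mul, unip_zero, _root_.map_one]
  have hcommzx : ((σ (unip c') : GL2) : Matrix (Fin 2) (Fin 2) R) * (x : Matrix (Fin 2) (Fin 2) R)
      = (x : Matrix (Fin 2) (Fin 2) R) * ((σ (unip c') : GL2) : Matrix (Fin 2) (Fin 2) R) := by
    have e : (unip c' : GL2) * unip 1 = unip 1 * unip c' := by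
      rw [unip_mul, unip_mul, add_comm]
    have h2 : σ (unip c') * x = x * σ (unip c') := by
      rw [hxdef, ← _root_.map_mul, ← _root_.map_mul, e]
    rw [← Units.val_mul, ← Units.val_mul, h2]
  have hzv := claimA (σ (unip c')) hzp hcommzx
  have hrel : (unip (1:R) : GL2) * X = X * unip c' := by rw [← hc']; group
  have hrelσ : x * σ X = σ X * σ (unip c') := by
    rw [hxdef, ← _root_.map_mul, ← _root_.map_mul, hrel]
  have hrelval : (x : Matrix (Fin 2) (Fin 2) R) * ((σ X : GL2) : Matrix (Fin 2) (Fin 2) R)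
      = ((σ X : GL2) : Matrix (Fin 2) (Fin 2) R) * ((σ (unip c') : GL2) : Matrix (Fin 2) (Fin 2) R) := by
    rw [← Units.val_mul, ← Units.val_mul, hrelσ]
  set Hm := ((σ X : GL2) : Matrix (Fin 2) (Fin 2) R) with hHmdef
  have hz0 : (((σ (unip c') : GL2) : Matrix (Fin 2) (Fin 2) R) - 1) *ᵥ v = 0 := by
    rw [Matrix.sub_mulVec, hzv, Matrix.one_mulVec, sub_self]
  have e : m * Hm = Hm * (((σ (unip c') : GL2) : Matrix (Fin 2) (Fin 2) R) - 1) := by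
    rw [hmdef, sub_mul, one_mul, hrelval, mul_sub, mul_one]
  have hkey : m *ᵥ (Hm *ᵥ v) = 0 := by
    rw [Matrix.mulVec_mulVec, e, ← Matrix.mulVec_mulVec, hz0, Matrix.mulVec_zero]
  have hcr := hcross _ hkey
  simp only [Matrix.mulVec, dotProduct, Fin.sum_univ_two] at hcr
  rw [ha, hb] at hcr
  have hq : d * d * (((-b) * Hm 0 0 + a * Hm 1 0) * a + ((-b) * Hm 0 1 + a * Hm 1 1) * b) = 0 := by
    linear_combination (-1 : R) * hcr
  have hbr := (mul_eq_zero.mp hq).resolve_left (mul_ne_zero hd0 hd0)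
  show ((_ : GL2) : Matrix (Fin 2) (Fin 2) R) 1 0 = 0
  have hval2 : (((⟨!![a, -tt; b, s], !![s, tt; -b, a], hP1, hP2⟩ : GL2)⁻¹ * σ X
        * (⟨!![a, -tt; b, s], !![s, tt; -b, a], hP1, hP2⟩ : GL2) : GL2) : Matrix (Fin 2) (Fin 2) R)
      = !![s, tt; -b, a] * Hm * !![a, -tt; b, s] := rfl
  rw [hval2]
  simp [Matrix.mul_apply, Fin.sum_univ_two, Matrix.vecMul, dotProduct]
  linear_combination hbr

end Aux

/-- Every automorphism of `GL₂(F[t])` sends the subgroup `B` of upper-triangular matrices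
(resp. the subgroup `U` of upper-unipotent matrices) to a conjugate `gBg⁻¹`
(resp. `gUg⁻¹`), for one and the same `g`. -/
theorem aut_maps_borel_and_unipotent_to_conjugate (F : Type) [Field F] [Fintype F]
    (σ : MulAut (Matrix.GeneralLinearGroup (Fin 2) (Polynomial F))) :
    ∃ g : Matrix.GeneralLinearGroup (Fin 2) (Polynomial F),
      Subgroup.map σ.toMonoidHom (upperTriangular F) =
        Subgroup.map (MulAut.conj g).toMonoidHom (upperTriangular F) ∧
      Subgroup.map σ.toMonoidHom (upperUnipotent F) =
        Subgroup.map (MulAut.conj g).toMonoidHom (upperUnipotent F) := by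
  classical
  obtain ⟨P, hP⟩ := conj_into_B σ
  obtain ⟨Q, hQ'⟩ := conj_into_B σ⁻¹
  have hQ : ∀ X ∈ upperTriangular F, Q⁻¹ * σ.symm X * Q ∈ upperTriangular F := hQ'
  have hmB : σ Q * P ∈ upperTriangular F := by
    apply mem_B_of_conj_mem
    have h1 : Q⁻¹ * σ.symm (unip 1) * Q ∈ upperTriangular F := hQ _ (unip_mem_B 1)
    have h2 := hP _ h1
    have e : (σ Q * P)⁻¹ * unip 1 * (σ Q * P)
        = P⁻¹ * σ (Q⁻¹ * σ.symm (unip 1) * Q) * P := by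
      rw [_root_.map_mul, _root_.map_mul, _root_.map_inv, σ.apply_symm_apply]
      group
    rw [e]
    exact h2
  have hBiff : ∀ y : Matrix.GeneralLinearGroup (Fin 2) (Polynomial F),
      σ.symm y ∈ upperTriangular F ↔ P⁻¹ * y * P ∈ upperTriangular F := by
    intro y
    constructor
    · intro hy
      have h2 := hP _ hy
      rwa [σ.apply_symm_apply] at h2
    · intro hy
      have hW : (σ Q * P) * (P⁻¹ * y * P) * (σ Q * P)⁻¹ ∈ upperTriangular F :=
        mul_mem (mul_mem hmB hy) (inv_mem hmB)
      have h2 := hQ _ hW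
      have e : σ.symm ((σ Q * P) * (P⁻¹ * y * P) * (σ Q * P)⁻¹)
          = Q * σ.symm y * Q⁻¹ := by
        have e2 : (σ Q * P) * (P⁻¹ * y * P) * (σ Q * P)⁻¹ = σ Q * y * (σ Q)⁻¹ := by group
        rw [e2, _root_.map_mul, _root_.map_mul, _root_.map_inv, σ.symm_apply_apply]
      rw [e] at h2
      have e3 : Q⁻¹ * (Q * σ.symm y * Q⁻¹) * Q = σ.symm y := by group
      rwa [e3] at h2
  have hpow1 : ∀ y : Matrix.GeneralLinearGroup (Fin 2) (Polynomial F),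
      (σ.symm y) ^ (ringChar F) = 1 ↔ y ^ (ringChar F) = 1 := by
    intro y
    rw [← _root_.map_pow]
    exact EmbeddingLike.map_eq_one_iff
  have hpow2 : ∀ y : Matrix.GeneralLinearGroup (Fin 2) (Polynomial F),
      (P⁻¹ * y * P) ^ (ringChar F) = 1 ↔ y ^ (ringChar F) = 1 := by
    intro y
    have e : P⁻¹ * y * P = (MulAut.conj P⁻¹) y := by rw [MulAut.conj_apply, inv_inv]
    rw [e, ← _root_.map_pow]
    exact EmbeddingLike.map_eq_one_iff
  refine ⟨P, ?_, ?_⟩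
  · ext y
    rw [Subgroup.mem_map_equiv, Subgroup.mem_map_equiv, MulAut.conj_symm_apply]
    exact hBiff y
  · ext y
    rw [Subgroup.mem_map_equiv, Subgroup.mem_map_equiv, MulAut.conj_symm_apply,
      mem_U_iff_charP, mem_U_iff_charP]
    constructor
    · rintro ⟨h1, h2⟩
      exact ⟨(hBiff y).mp h1, (hpow2 y).mpr ((hpow1 y).mp h2)⟩
    · rintro ⟨h1, h2⟩
      exact ⟨(hBiff y).mpr h1, (hpow1 y).mpr ((hpow2 y).mp h2)⟩
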